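/- For every ε > 0 there exists M such that for every finite group G of order n admitting a transitive action on a finite set of size m with m ≥ M, there exist subsets A, B, C of G with B = C, such that there is no true equation ab = c with a ∈ A, b ∈ B, c ∈ C, and #A · #B · #C ≥ (e^{−1} − ε) · n³/m. -/

import Mathlib

set_option maxHeartbeats 1000000

open Finset

section Ew
variable {α : Type} [DecidableEq α]
set_option linter.unusedSectionVars false

/-- Expectation of `f` over random subsets of `V`, each element included with prob `p`. -/
noncomputable def Ew (p : ℝ) (V : Finset α) (f : Finset α → ℝ) : ℝ :=
  ∑ S ∈ V.powerset, p ^ S.card * (1 - p) ^ (V.card - S.card) * f S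

theorem Ew_congr {p : ℝ} {V : Finset α} {f g : Finset α → ℝ}
    (h : ∀ S ⊆ V, f S = g S) : Ew p V f = Ew p V g := by
  unfold Ew
  refine Finset.sum_congr rfl fun S hS => ?_
  rw [h S (Finset.mem_powerset.1 hS)]

theorem Ew_insert {p : ℝ} {V : Finset α} {x : α} (hx : x ∉ V) (f : Finset α → ℝ) :
    Ew p (insert x V) f = (1 - p) * Ew p V f + p * Ew p V (fun S => f (insert x S)) := by
  unfold Ew
  rw [Finset.powerset_insert, Finset.sum_union, Finset.sum_image, Finset.mul_sum,
    Finset.mul_sum]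
  · congr 1
    · refine Finset.sum_congr rfl fun S hS => ?_
      have hSV : S ⊆ V := Finset.mem_powerset.1 hS
      have hc : S.card ≤ V.card := Finset.card_le_card hSV
      rw [Finset.card_insert_of_notMem hx]
      have : V.card + 1 - S.card = (V.card - S.card) + 1 := by omega
      rw [this, pow_succ]
      ring
    · refine Finset.sum_congr rfl fun S hS => ?_
      have hSV : S ⊆ V := Finset.mem_powerset.1 hS
      have hxS : x ∉ S := fun h => hx (hSV h)
      rw [Finset.card_insert_of_notMem hxS, Finset.card_insert_of_notMem hx]
      have hc : S.card ≤ V.card := Finset.card_le_card hSV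
      have : V.card + 1 - (S.card + 1) = V.card - S.card := by omega
      rw [this, pow_succ]
      ring
  · intro S hS T hT hST
    have hxS : x ∉ S := fun h => hx ((Finset.mem_powerset.1 hS) h)
    have hxT : x ∉ T := fun h => hx ((Finset.mem_powerset.1 hT) h)
    have := congrArg (Finset.erase · x) hST
    simpa [Finset.erase_insert hxS, Finset.erase_insert hxT] using this
  · rw [Finset.disjoint_right]
    rintro T hT hT2
    obtain ⟨S, hS, rfl⟩ := Finset.mem_image.1 hT
    exact hx ((Finset.mem_powerset.1 hT2) (Finset.mem_insert_self x S))

theorem Ew_add {p : ℝ} {V : Finset α} (f g : Finset α → ℝ) :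
    Ew p V (fun S => f S + g S) = Ew p V f + Ew p V g := by
  unfold Ew; rw [← Finset.sum_add_distrib]; exact Finset.sum_congr rfl fun S _ => by ring

theorem Ew_sub {p : ℝ} {V : Finset α} (f g : Finset α → ℝ) :
    Ew p V (fun S => f S - g S) = Ew p V f - Ew p V g := by
  unfold Ew; rw [← Finset.sum_sub_distrib]; exact Finset.sum_congr rfl fun S _ => by ring

theorem Ew_const_mul {p : ℝ} {V : Finset α} (c : ℝ) (f : Finset α → ℝ) :
    Ew p V (fun S => c * f S) = c * Ew p V f := by
  unfold Ew; rw [Finset.mul_sum]; exact Finset.sum_congr rfl fun S _ => by ring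

theorem Ew_one {p : ℝ} (V : Finset α) : Ew p V (fun _ => (1:ℝ)) = 1 := by
  induction V using Finset.induction_on with
  | empty => simp [Ew]
  | insert _ _ hx ih => rw [Ew_insert hx]; rw [ih]; ring

theorem Ew_const {p : ℝ} (V : Finset α) (c : ℝ) : Ew p V (fun _ => c) = c := by
  have := Ew_const_mul (p := p) (V := V) c (fun _ => (1:ℝ))
  simpa [Ew_one] using this

theorem Ew_mono {p : ℝ} (hp0 : 0 ≤ p) (hp1 : p ≤ 1) {V : Finset α} {f g : Finset α → ℝ}
    (h : ∀ S ⊆ V, f S ≤ g S) : Ew p V f ≤ Ew p V g := by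
  unfold Ew
  refine Finset.sum_le_sum fun S hS => ?_
  have := h S (Finset.mem_powerset.1 hS)
  have hw : (0:ℝ) ≤ p ^ S.card * (1 - p) ^ (V.card - S.card) :=
    mul_nonneg (pow_nonneg hp0 _) (pow_nonneg (by linarith) _)
  nlinarith

theorem Ew_nonneg {p : ℝ} (hp0 : 0 ≤ p) (hp1 : p ≤ 1) {V : Finset α} {f : Finset α → ℝ}
    (h : ∀ S ⊆ V, 0 ≤ f S) : 0 ≤ Ew p V f := by
  have := Ew_mono hp0 hp1 (V := V) (f := fun _ => (0:ℝ)) (g := f) (fun S hS => h S hS)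
  simpa [Ew_const] using this

theorem Ew_sum {p : ℝ} {V : Finset α} {ι : Type*} (s : Finset ι) (F : ι → Finset α → ℝ) :
    Ew p V (fun S => ∑ i ∈ s, F i S) = ∑ i ∈ s, Ew p V (F i) := by
  unfold Ew
  rw [Finset.sum_comm]
  exact Finset.sum_congr rfl fun S _ => by rw [Finset.mul_sum]

/-- Harris inequality for decreasing functions. -/
theorem Ew_harris {p : ℝ} (hp0 : 0 ≤ p) (hp1 : p ≤ 1) (V : Finset α) : ∀ (f g : Finset α → ℝ),
    (∀ S T : Finset α, S ⊆ T → f T ≤ f S) → (∀ S T : Finset α, S ⊆ T → g T ≤ g S) →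
    Ew p V f * Ew p V g ≤ Ew p V (fun S => f S * g S) := by
  induction V using Finset.induction_on with
  | empty => intro f g hf hg; simp [Ew]
  | @insert x V hx ih =>
    intro f g hf hg
    rw [Ew_insert hx, Ew_insert hx, Ew_insert hx]
    set A := Ew p V f with hA
    set B := Ew p V (fun S => f (insert x S)) with hB
    set C := Ew p V g with hC
    set D := Ew p V (fun S => g (insert x S)) with hD
    have h1 : A * C ≤ Ew p V (fun S => f S * g S) := ih f g hf hg
    have h2 : B * D ≤ Ew p V (fun S => f (insert x S) * g (insert x S)) :=
      ih (fun S => f (insert x S)) (fun S => g (insert x S))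
        (fun S T hST => hf _ _ (Finset.insert_subset_insert x hST))
        (fun S T hST => hg _ _ (Finset.insert_subset_insert x hST))
    have hBA : B ≤ A := Ew_mono hp0 hp1 (fun S _ => hf S (insert x S) (Finset.subset_insert x S))
    have hDC : D ≤ C := Ew_mono hp0 hp1 (fun S _ => hg S (insert x S) (Finset.subset_insert x S))
    have key : ((1-p) * A + p * B) * ((1-p) * C + p * D) ≤ (1-p) * (A*C) + p * (B*D) := by
      nlinarith [mul_nonneg (mul_nonneg hp0 (by linarith : (0:ℝ) ≤ 1 - p))
        (mul_nonneg (sub_nonneg.2 hBA) (sub_nonneg.2 hDC))]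
    calc ((1-p) * A + p * B) * ((1-p) * C + p * D) ≤ (1-p) * (A*C) + p * (B*D) := key
      _ ≤ (1-p) * Ew p V (fun S => f S * g S)
            + p * Ew p V (fun S => f (insert x S) * g (insert x S)) := by
          have hq : (0:ℝ) ≤ 1 - p := by linarith
          nlinarith

/-- Iterated Harris for products of nonnegative decreasing functions. -/
theorem Ew_harris_prod {p : ℝ} (hp0 : 0 ≤ p) (hp1 : p ≤ 1) (V : Finset α)
    {ι : Type*} [DecidableEq ι] (s : Finset ι) (g : ι → Finset α → ℝ)
    (hmono : ∀ i ∈ s, ∀ S T : Finset α, S ⊆ T → g i T ≤ g i S)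
    (hnn : ∀ i ∈ s, ∀ S : Finset α, 0 ≤ g i S) :
    ∏ i ∈ s, Ew p V (g i) ≤ Ew p V (fun S => ∏ i ∈ s, g i S) := by
  induction s using Finset.induction_on with
  | empty => simp [Ew_one]
  | @insert j s hj ih =>
    rw [Finset.prod_insert hj]
    have hrestm : ∀ S T : Finset α, S ⊆ T → (∏ i ∈ s, g i T) ≤ ∏ i ∈ s, g i S := by
      intro S T hST
      exact Finset.prod_le_prod (fun i hi => hnn i (Finset.mem_insert_of_mem hi) T)
        (fun i hi => hmono i (Finset.mem_insert_of_mem hi) S T hST)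
    have hrestnn : ∀ S, 0 ≤ ∏ i ∈ s, g i S := fun S =>
      Finset.prod_nonneg fun i hi => hnn i (Finset.mem_insert_of_mem hi) S
    have ih' := ih (fun i hi => hmono i (Finset.mem_insert_of_mem hi))
      (fun i hi => hnn i (Finset.mem_insert_of_mem hi))
    have hEgj : 0 ≤ Ew p V (g j) :=
      Ew_nonneg hp0 hp1 (fun S _ => hnn j (Finset.mem_insert_self j s) S)
    calc Ew p V (g j) * ∏ i ∈ s, Ew p V (g i)
        ≤ Ew p V (g j) * Ew p V (fun S => ∏ i ∈ s, g i S) := by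
          exact mul_le_mul_of_nonneg_left ih' hEgj
      _ ≤ Ew p V (fun S => g j S * ∏ i ∈ s, g i S) :=
          Ew_harris hp0 hp1 V _ _ (hmono j (Finset.mem_insert_self j s)) hrestm
      _ = Ew p V (fun S => ∏ i ∈ insert j s, g i S) := by
          refine Ew_congr fun S _ => ?_
          rw [Finset.prod_insert hj]

/-- The probability that a fixed set `T ⊆ V` is contained in the random set. -/
theorem Ew_subset_ind {p : ℝ} {V T : Finset α} (hT : T ⊆ V) :
    Ew p V (fun S => if T ⊆ S then (1:ℝ) else 0) = p ^ T.card := by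
  induction V using Finset.induction_on generalizing T with
  | empty =>
    have : T = ∅ := Finset.subset_empty.1 hT
    subst this; simp [Ew]
  | @insert x V hx ih =>
    rw [Ew_insert hx]
    by_cases hxT : x ∈ T
    · have hTe : T.erase x ⊆ V := by
        intro t ht
        have h1 := hT (Finset.mem_of_mem_erase ht)
        rcases Finset.mem_insert.1 h1 with h2 | h2
        · exact absurd h2 (Finset.ne_of_mem_erase ht)
        · exact h2
      have h1 : Ew p V (fun S => if T ⊆ S then (1:ℝ) else 0) = 0 := by
        rw [Ew_congr (g := fun _ => (0:ℝ)) ?_, Ew_const]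
        intro S hS
        rw [if_neg]
        intro hTS
        exact hx (hS (hTS hxT))
      have h2 : Ew p V (fun S => if T ⊆ insert x S then (1:ℝ) else 0)
          = p ^ (T.erase x).card := by
        rw [← ih hTe]
        refine Ew_congr fun S hS => ?_
        have hiff : T ⊆ insert x S ↔ T.erase x ⊆ S := by
          constructor
          · intro h t ht
            have h3 := h (Finset.mem_of_mem_erase ht)
            rcases Finset.mem_insert.1 h3 with h4 | h4
            · exact absurd h4 (Finset.ne_of_mem_erase ht)
            · exact h4
          · intro h t ht
            by_cases htx : t = x
            · exact Finset.mem_insert.2 (Or.inl htx)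
            · exact Finset.mem_insert_of_mem (h (Finset.mem_erase.2 ⟨htx, ht⟩))
        simp only [hiff]
      rw [h1, h2, Finset.card_erase_of_mem hxT]
      have hc : 1 ≤ T.card := Finset.card_pos.2 ⟨x, hxT⟩
      rw [mul_zero, zero_add, ← pow_succ']
      congr 1
      omega
    · have hTV : T ⊆ V := by
        intro t ht
        rcases Finset.mem_insert.1 (hT ht) with h1 | h1
        · exact absurd (h1 ▸ ht) hxT
        · exact h1
      have heq : Ew p V (fun S => if T ⊆ insert x S then (1:ℝ) else 0)
          = Ew p V (fun S => if T ⊆ S then (1:ℝ) else 0) := by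
        refine Ew_congr fun S hS => ?_
        have hiff : T ⊆ insert x S ↔ T ⊆ S := by
          constructor
          · intro h t ht
            rcases Finset.mem_insert.1 (h ht) with h1 | h1
            · exact absurd (h1 ▸ ht) hxT
            · exact h1
          · exact fun h => h.trans (Finset.subset_insert x S)
        simp only [hiff]
      rw [heq, ih hTV]
      ring

theorem Ew_pair {p : ℝ} {V : Finset α} {x y : α} (hx : x ∈ V) (hy : y ∈ V) :
    Ew p V (fun S => if x ∈ S ∧ y ∈ S then (1:ℝ) else 0)
      = p ^ (insert x {y} : Finset α).card := by
  rw [← Ew_subset_ind (T := insert x {y}) (by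
    intro t ht
    rcases Finset.mem_insert.1 ht with h | h
    · exact h ▸ hx
    · exact (Finset.mem_singleton.1 h) ▸ hy)]
  refine Ew_congr fun S hS => ?_
  have : x ∈ S ∧ y ∈ S ↔ insert x {y} ⊆ S := by
    rw [Finset.insert_subset_iff, Finset.singleton_subset_iff]
  simp only [this]

/-- Key bound: probability that the random set `S` avoids `σ(S)`. -/
theorem Ew_avoid {p : ℝ} (hp0 : 0 ≤ p) (hp1 : p ≤ 1) [Fintype α] (σ : α → α) :
    (1-p) ^ (Finset.univ.filter (fun x => σ x = x)).card * (1 - p^2) ^ (Fintype.card α)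
      ≤ Ew p Finset.univ (fun S => if ∀ x, ¬(x ∈ S ∧ σ x ∈ S) then (1:ℝ) else 0) := by
  classical
  set g : α → Finset α → ℝ := fun x S => if x ∈ S ∧ σ x ∈ S then (0:ℝ) else 1 with hg
  have hprod : ∀ S : Finset α,
      (∏ x ∈ Finset.univ, g x S) = if ∀ x, ¬(x ∈ S ∧ σ x ∈ S) then (1:ℝ) else 0 := by
    intro S
    have : ∀ x : α, g x S = if ¬(x ∈ S ∧ σ x ∈ S) then (1:ℝ) else 0 := by
      intro x; by_cases h : x ∈ S ∧ σ x ∈ S <;> simp [hg, h]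
    rw [Finset.prod_congr rfl (fun x _ => this x), Finset.prod_boole]
    simp
  have hmono : ∀ x, ∀ S T : Finset α, S ⊆ T → g x T ≤ g x S := by
    intro x S T hST
    by_cases h : x ∈ S ∧ σ x ∈ S
    · have h2 : x ∈ T ∧ σ x ∈ T := ⟨hST h.1, hST h.2⟩
      simp [hg, h, h2]
    · have : g x S = 1 := by simp [hg, h]
      rw [this]
      by_cases h2 : x ∈ T ∧ σ x ∈ T <;> simp [hg, h2]
  have hnn : ∀ x, ∀ S : Finset α, 0 ≤ g x S := by
    intro x S; by_cases h : x ∈ S ∧ σ x ∈ S <;> simp [hg, h]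
  have hharris := Ew_harris_prod hp0 hp1 Finset.univ Finset.univ g
    (fun i _ => hmono i) (fun i _ => hnn i)
  have hEg : ∀ x : α, Ew p Finset.univ (g x)
      = 1 - p ^ (insert x {σ x} : Finset α).card := by
    intro x
    have : ∀ S : Finset α, g x S
        = 1 - (if x ∈ S ∧ σ x ∈ S then (1:ℝ) else 0) := by
      intro S; by_cases h : x ∈ S ∧ σ x ∈ S <;> simp [hg, h]
    rw [Ew_congr (fun S _ => this S), Ew_sub, Ew_const,
      Ew_pair (Finset.mem_univ x) (Finset.mem_univ (σ x))]
  have hfactor : (∏ x ∈ Finset.univ, Ew p Finset.univ (g x))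
      = (1-p) ^ (Finset.univ.filter (fun x => σ x = x)).card
        * (1 - p^2) ^ (Finset.univ.filter (fun x => ¬ σ x = x)).card := by
    rw [Finset.prod_congr rfl (fun x _ => hEg x)]
    have : ∀ x : α, (1:ℝ) - p ^ (insert x {σ x} : Finset α).card
        = if σ x = x then 1 - p else 1 - p^2 := by
      intro x
      by_cases h : σ x = x
      · simp [h]
      · rw [if_neg h, Finset.card_insert_of_notMem (by simp [Ne.symm h]),
          Finset.card_singleton]
    rw [Finset.prod_congr rfl (fun x _ => this x), Finset.prod_ite,
      Finset.prod_const, Finset.prod_const]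
  have hple : (0:ℝ) ≤ 1 - p^2 := by nlinarith
  have hple2 : (1:ℝ) - p^2 ≤ 1 := by nlinarith
  have hcardle : (Finset.univ.filter (fun x => ¬ σ x = x)).card ≤ Fintype.card α :=
    Finset.card_le_card (Finset.filter_subset _ _)
  have hpow : (1 - p^2) ^ (Fintype.card α)
      ≤ (1 - p^2) ^ (Finset.univ.filter (fun x => ¬ σ x = x)).card :=
    pow_le_pow_of_le_one hple hple2 hcardle
  have h1p : (0:ℝ) ≤ (1-p) ^ (Finset.univ.filter (fun x => σ x = x)).card :=
    pow_nonneg (by linarith) _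
  calc (1-p) ^ (Finset.univ.filter (fun x => σ x = x)).card * (1 - p^2) ^ (Fintype.card α)
      ≤ (1-p) ^ (Finset.univ.filter (fun x => σ x = x)).card
        * (1 - p^2) ^ (Finset.univ.filter (fun x => ¬ σ x = x)).card :=
        mul_le_mul_of_nonneg_left hpow h1p
    _ = ∏ x ∈ Finset.univ, Ew p Finset.univ (g x) := hfactor.symm
    _ ≤ Ew p Finset.univ (fun S => ∏ x ∈ Finset.univ, g x S) := hharris
    _ = Ew p Finset.univ (fun S => if ∀ x, ¬(x ∈ S ∧ σ x ∈ S) then (1:ℝ) else 0) :=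
        Ew_congr (fun S _ => hprod S)

/-- Variance bound for the size of the random set. -/
theorem Ew_card_var {p : ℝ} [Fintype α] (hp0 : 0 ≤ p) (hp1 : p ≤ 1) :
    Ew p (Finset.univ : Finset α) (fun S => ((S.card : ℝ) - p * (Fintype.card α))^2)
      ≤ p * Fintype.card α := by
  classical
  set m : ℕ := Fintype.card α with hm
  set ind : α → Finset α → ℝ := fun x S => if x ∈ S then (1:ℝ) else 0 with hind
  have hEind : ∀ x : α, Ew p Finset.univ (ind x) = p := by
    intro x
    have h1 : ∀ S : Finset α, ind x S = if ({x} : Finset α) ⊆ S then (1:ℝ) else 0 := by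
      intro S; simp [hind, Finset.singleton_subset_iff]
    rw [Ew_congr (fun S _ => h1 S), Ew_subset_ind (Finset.singleton_subset_iff.2
      (Finset.mem_univ x)), Finset.card_singleton, pow_one]
  have hEpair : ∀ x y : α, Ew p Finset.univ (fun S => ind x S * ind y S)
      = if y = x then p else p^2 := by
    intro x y
    have h1 : ∀ S : Finset α, ind x S * ind y S
        = if x ∈ S ∧ y ∈ S then (1:ℝ) else 0 := by
      intro S
      by_cases h : x ∈ S <;> by_cases h2 : y ∈ S <;> simp [hind, h, h2]
    rw [Ew_congr (fun S _ => h1 S), Ew_pair (Finset.mem_univ x) (Finset.mem_univ y)]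
    by_cases h : y = x
    · subst h; simp
    · rw [if_neg h, Finset.card_insert_of_notMem (by simp [Ne.symm h]),
        Finset.card_singleton]
  have hcard : ∀ S : Finset α, S ⊆ Finset.univ → (S.card:ℝ) = ∑ x ∈ Finset.univ, ind x S := by
    intro S _
    rw [Finset.sum_boole]
    congr 1
    rw [Finset.filter_mem_eq_inter, Finset.univ_inter]
  have hexp : ∀ S ⊆ (Finset.univ : Finset α), ((S.card : ℝ) - p * m)^2
      = (∑ x ∈ Finset.univ, ∑ y ∈ Finset.univ, ind x S * ind y S)
        - (2*p*m) * (∑ x ∈ Finset.univ, ind x S) + (p*m)^2 := by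
    intro S hS
    rw [← Finset.sum_mul_sum]
    rw [hcard S hS]
    ring
  rw [Ew_congr hexp, Ew_add, Ew_sub, Ew_const, Ew_sum, Ew_const_mul, Ew_sum]
  have h2 : (∑ x ∈ Finset.univ, Ew p Finset.univ (ind x)) = (m:ℝ) * p := by
    rw [Finset.sum_congr rfl (fun x _ => hEind x), Finset.sum_const, Finset.card_univ]
    simp [hm, nsmul_eq_mul]
  have h3 : ∀ x : α, Ew p Finset.univ (fun S => ∑ y ∈ Finset.univ, ind x S * ind y S)
      = p - p^2 + (m:ℝ) * p^2 := by
    intro x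
    rw [Ew_sum]
    rw [Finset.sum_congr rfl (fun y _ => hEpair x y)]
    have hsplit : ∀ y : α, (if y = x then p else p^2)
        = (if y = x then p - p^2 else 0) + p^2 := by
      intro y; by_cases h : y = x <;> simp [h]
    rw [Finset.sum_congr rfl (fun y _ => hsplit y), Finset.sum_add_distrib,
      Finset.sum_ite_eq' Finset.univ x (fun _ => p - p^2), Finset.sum_const,
      Finset.card_univ, if_pos (Finset.mem_univ x)]
    simp [hm, nsmul_eq_mul]
  rw [Finset.sum_congr rfl (fun x _ => h3 x), Finset.sum_const, Finset.card_univ, h2]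
  have hmp : (0:ℝ) ≤ (m:ℝ) * p^2 := by positivity
  simp only [nsmul_eq_mul, hm]
  nlinarith [hmp]

/-- Some subset achieves at least the mean. -/
theorem Ew_exists_ge {p : ℝ} (hp0 : 0 < p) (hp1 : p < 1) (V : Finset α) (f : Finset α → ℝ) :
    ∃ S ⊆ V, Ew p V f ≤ f S := by
  by_contra hcon
  push_neg at hcon
  have hlt : Ew p V f < Ew p V f := by
    conv_lhs => rw [Ew]
    have h1 : ∑ S ∈ V.powerset, p ^ S.card * (1 - p) ^ (V.card - S.card) * f S
        < ∑ S ∈ V.powerset, p ^ S.card * (1 - p) ^ (V.card - S.card) * Ew p V f := by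
      refine Finset.sum_lt_sum_of_nonempty ⟨∅, Finset.empty_mem_powerset V⟩ ?_
      intro S hS
      have hw : (0:ℝ) < p ^ S.card * (1 - p) ^ (V.card - S.card) :=
        mul_pos (pow_pos hp0 _) (pow_pos (by linarith) _)
      exact mul_lt_mul_of_pos_left (hcon S (Finset.mem_powerset.1 hS)) hw
    have h2 : ∑ S ∈ V.powerset, p ^ S.card * (1 - p) ^ (V.card - S.card) * Ew p V f
        = Ew p V f := by
      have := Ew_one (p := p) V
      rw [Ew] at this
      rw [← Finset.sum_mul]
      rw [show ∑ S ∈ V.powerset, p ^ S.card * (1 - p) ^ (V.card - S.card)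
        = ∑ S ∈ V.powerset, p ^ S.card * (1 - p) ^ (V.card - S.card) * 1 by
          exact Finset.sum_congr rfl fun S _ => by ring]
      rw [this, one_mul]
    linarith
  exact absurd hlt (lt_irrefl _)

end Ew

section GroupCount
variable {G : Type} [Group G] [Fintype G] {X : Type} [Fintype X] [DecidableEq X] [MulAction G X]

theorem fiber_card_eq (htrans : MulAction.IsPretransitive G X) (x₀ x : X) :
    (Finset.univ.filter fun g : G => g • x₀ = x).card
      = (Finset.univ.filter fun g : G => g • x₀ = x₀).card := by
  obtain ⟨g₀, hg₀⟩ := htrans.exists_smul_eq x₀ x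
  refine Finset.card_bij' (fun g _ => g₀⁻¹ * g) (fun h _ => g₀ * h) ?_ ?_ ?_ ?_
  · intro g hg
    simp only [Finset.mem_filter, Finset.mem_univ, true_and] at hg ⊢
    rw [mul_smul, hg, ← hg₀, inv_smul_smul]
  · intro h hh
    simp only [Finset.mem_filter, Finset.mem_univ, true_and] at hh ⊢
    rw [mul_smul, hh, hg₀]
  · intro g _; group
  · intro h _; group

theorem stab_card_eq (htrans : MulAction.IsPretransitive G X) (x₀ x : X) :
    (Finset.univ.filter fun a : G => a • x = x).card
      = (Finset.univ.filter fun g : G => g • x₀ = x₀).card := by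
  obtain ⟨g₀, hg₀⟩ := htrans.exists_smul_eq x₀ x
  refine Finset.card_bij' (fun a _ => g₀⁻¹ * a * g₀) (fun h _ => g₀ * h * g₀⁻¹) ?_ ?_ ?_ ?_
  · intro a ha
    simp only [Finset.mem_filter, Finset.mem_univ, true_and] at ha ⊢
    rw [mul_smul, mul_smul, hg₀, ha, ← hg₀, inv_smul_smul]
  · intro h hh
    simp only [Finset.mem_filter, Finset.mem_univ, true_and] at hh ⊢
    rw [← hg₀, mul_smul, mul_smul, inv_smul_smul, hh]
  · intro a _; group
  · intro h _; group

theorem card_group_eq (htrans : MulAction.IsPretransitive G X) (x₀ : X) :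
    Fintype.card G
      = Fintype.card X * (Finset.univ.filter fun g : G => g • x₀ = x₀).card := by
  have h1 : (Finset.univ : Finset G).card
      = ∑ x ∈ (Finset.univ : Finset X),
        ((Finset.univ : Finset G).filter (fun g => g • x₀ = x)).card :=
    Finset.card_eq_sum_card_fiberwise (fun g _ => Finset.mem_univ _)
  rw [← Finset.card_univ, h1,
    Finset.sum_congr rfl (fun x _ => fiber_card_eq htrans x₀ x),
    Finset.sum_const, Finset.card_univ, smul_eq_mul]

theorem sum_fix_eq (htrans : MulAction.IsPretransitive G X) (x₀ : X) :
    ∑ a ∈ (Finset.univ : Finset G), (Finset.univ.filter fun x : X => a • x = x).card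
      = Fintype.card G := by
  have h1 : ∀ a : G, (Finset.univ.filter fun x : X => a • x = x).card
      = ∑ x ∈ (Finset.univ : Finset X), if a • x = x then 1 else 0 := by
    intro a; rw [Finset.sum_boole]; simp
  rw [Finset.sum_congr rfl (fun a _ => h1 a), Finset.sum_comm]
  have h2 : ∀ x : X, (∑ a ∈ (Finset.univ : Finset G), if a • x = x then 1 else 0)
      = (Finset.univ.filter fun g : G => g • x₀ = x₀).card := by
    intro x
    rw [Finset.sum_boole]
    · simp only [Nat.cast_id]
      exact stab_card_eq htrans x₀ x
  rw [Finset.sum_congr rfl (fun x _ => h2 x), Finset.sum_const, Finset.card_univ,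
    smul_eq_mul, ← card_group_eq htrans x₀]

end GroupCount

theorem exp_neg_one_le_pow {m : ℕ} (hm : 2 ≤ m) :
    Real.exp (-1) * (1 - 1/(m:ℝ)) ≤ (1 - 1/(m:ℝ))^m := by
  have hm1 : (1:ℝ) ≤ (m:ℝ) - 1 := by
    have : (2:ℝ) ≤ (m:ℝ) := by exact_mod_cast hm
    linarith
  set u : ℝ := 1/((m:ℝ)-1) with hu
  have hupos : 0 < u := by positivity
  have h1u : 1 + u = (m:ℝ)/((m:ℝ)-1) := by
    rw [hu]
    have hm1ne : (m:ℝ) - 1 ≠ 0 := by linarith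
    field_simp
    ring
  have hexpu : Real.exp (-u) ≤ 1 - 1/(m:ℝ) := by
    have h1 : 1 + u ≤ Real.exp u := by
      have := Real.add_one_le_exp u; linarith
    have h2 : Real.exp (-u) = (Real.exp u)⁻¹ := Real.exp_neg u
    have h3 : (Real.exp u)⁻¹ ≤ (1+u)⁻¹ := by
      apply inv_anti₀ (by linarith) h1
    have h4 : (1+u)⁻¹ = 1 - 1/(m:ℝ) := by
      rw [h1u]
      have hmne : (m:ℝ) ≠ 0 := by linarith
      have hm1ne : (m:ℝ) - 1 ≠ 0 := by linarith
      field_simp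
    rw [h2, ← h4]; exact h3
  have hcast : ((m - 1 : ℕ) : ℝ) = (m:ℝ) - 1 := by
    have : 1 ≤ m := by omega
    push_cast [this]; ring
  have hexp1 : Real.exp (-1) = Real.exp (-u) ^ (m - 1) := by
    rw [← Real.exp_nat_mul]
    congr 1
    rw [hcast, hu]
    field_simp
  have hpow : Real.exp (-u) ^ (m-1) ≤ (1 - 1/(m:ℝ)) ^ (m-1) :=
    pow_le_pow_left₀ (Real.exp_nonneg _) hexpu _
  have h1m : (0:ℝ) ≤ 1 - 1/(m:ℝ) := by
    rw [sub_nonneg]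
    rw [div_le_one (by linarith)]
    linarith
  calc Real.exp (-1) * (1 - 1/(m:ℝ)) = Real.exp (-u) ^ (m-1) * (1 - 1/(m:ℝ)) := by
        rw [hexp1]
    _ ≤ (1 - 1/(m:ℝ)) ^ (m-1) * (1 - 1/(m:ℝ)) := mul_le_mul_of_nonneg_right hpow h1m
    _ = (1 - 1/(m:ℝ)) ^ m := by
        rw [← pow_succ]
        congr 1
        omega

theorem numeric_key {c t mu eps : ℝ} (hc0 : 0 < c) (hc1 : c ≤ 1) (ht0 : 0 < t)
    (ht8 : t ≤ 1/8) (hte : 8*t ≤ eps) (hmu0 : 0 < mu) (hmut : mu ≤ t) :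
    c - eps ≤ ((1-t)^2*(c*(1-mu)) - t)*(1-t)^2 := by
  have e1 : ((1-t)^2*(c*(1-mu)) - t)*(1-t)^2 = c*((1-t)^4*(1-mu)) - t*(1-t)^2 := by ring
  have q4 : 1-4*t ≤ (1-t)^4 := by nlinarith [sq_nonneg t, sq_nonneg (1-t)]
  have q5 : (1-4*t)*(1-mu) ≤ (1-t)^4*(1-mu) :=
    mul_le_mul_of_nonneg_right q4 (by linarith)
  have q6 : (1-4*t)*(1-t) ≤ (1-4*t)*(1-mu) :=
    mul_le_mul_of_nonneg_left (by linarith) (by linarith)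
  have e2 : 1 - 5*t ≤ (1-t)^4*(1-mu) := by nlinarith [q5, q6, sq_nonneg t]
  have e3 : c*(1-5*t) ≤ c*((1-t)^4*(1-mu)) :=
    mul_le_mul_of_nonneg_left e2 (le_of_lt hc0)
  have e4 : t*(1-t)^2 ≤ t :=
    mul_le_of_le_one_right (le_of_lt ht0) (pow_le_one₀ (by linarith) (by linarith))
  have e5 : c*(5*t) ≤ 5*t := mul_le_of_le_one_left (by positivity) hc1
  rw [e1]
  nlinarith [e3, e4, e5]

/-- For every `ε > 0` there is an `M` such that every finite group `G` of
order `n` admitting a transitive action on a finite set of size `m ≥ M`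
has subsets `A, B, C` with `B = C`, admitting no true equation `a·b = c`
with `a ∈ A`, `b ∈ B`, `c ∈ C`, and with
`#A · #B · #C ≥ (e⁻¹ − ε) · n³/m`. -/
theorem gowers_bound_near_sharp (ε : ℝ) (hε : 0 < ε) :
    ∃ M : ℕ, ∀ (G : Type) [Group G] [Fintype G] (X : Type) [Fintype X]
      [MulAction G X], MulAction.IsPretransitive G X → M ≤ Fintype.card X →
      ∃ A B C : Finset G, B = C ∧
        (∀ a ∈ A, ∀ b ∈ B, ∀ c ∈ C, a * b ≠ c) ∧
        (Real.exp (-1) - ε) * (Fintype.card G : ℝ) ^ 3 / Fintype.card X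
          ≤ (A.card : ℝ) * B.card * C.card := by
  rcases le_or_gt (Real.exp (-1)) ε with hcase | hcase
  · -- trivial case: the bound is nonpositive
    refine ⟨0, fun G _ _ X _ _ _ _ => ⟨∅, ∅, ∅, rfl, by simp, ?_⟩⟩
    simp only [Finset.card_empty, Nat.cast_zero, mul_zero, zero_mul]
    apply div_nonpos_of_nonpos_of_nonneg
    · apply mul_nonpos_of_nonpos_of_nonneg (by linarith) (by positivity)
    · positivity
  -- main case
  set t : ℝ := min ε 1 / 8 with ht
  have htpos : 0 < t := by
    rw [ht]; have := lt_min_iff.2 ⟨hε, one_pos⟩; positivity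
  have ht8 : t ≤ 1/8 := by
    rw [ht]; have : min ε 1 ≤ 1 := min_le_right _ _; linarith
  have htε : 8 * t ≤ ε := by
    rw [ht]; have : min ε 1 ≤ ε := min_le_left _ _; linarith
  refine ⟨max 2 (Nat.ceil (t⁻¹^6)), ?_⟩
  intro G _ _ X _ _ htrans hM
  classical
  set m : ℕ := Fintype.card X with hmdef
  set n : ℕ := Fintype.card G with hndef
  have hm2 : 2 ≤ m := le_trans (le_max_left _ _) hM
  have hmceil : Nat.ceil (t⁻¹^6) ≤ m := le_trans (le_max_right _ _) hM
  have hmR : t⁻¹^6 ≤ (m:ℝ) := le_trans (Nat.le_ceil _) (by exact_mod_cast hmceil)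
  have hmpos : (0:ℝ) < m := by positivity
  have ht1 : (8:ℝ) ≤ t⁻¹ := by
    rw [← one_div, le_div_iff₀ htpos]
    linarith
  have hXne : Nonempty X := Fintype.card_pos_iff.1 (by omega)
  obtain ⟨x₀⟩ := hXne
  -- square-root scale
  set s : ℝ := Real.sqrt m with hsdef
  have hs0 : 0 < s := Real.sqrt_pos.2 hmpos
  have hs2 : s^2 = m := Real.sq_sqrt (le_of_lt hmpos)
  have hsge : t⁻¹^3 ≤ s := by
    rw [hsdef]
    rw [show (t⁻¹^3 : ℝ) = Real.sqrt ((t⁻¹^3)^2) from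
      (Real.sqrt_sq (by positivity)).symm]
    apply Real.sqrt_le_sqrt
    calc (t⁻¹^3)^2 = t⁻¹^6 := by ring
      _ ≤ (m:ℝ) := hmR
  have htinv1 : (1:ℝ) ≤ t⁻¹ := by linarith [ht1]
  have htinv3 : (8:ℝ) ≤ t⁻¹^3 := le_trans ht1 (le_self_pow₀ htinv1 (by norm_num))
  have hs8 : (8:ℝ) ≤ s := le_trans htinv3 hsge
  set p : ℝ := 1/s with hpdef
  have hp0 : 0 < p := by positivity
  have hp1 : p < 1 := by
    rw [hpdef, div_lt_one hs0]; linarith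
  have hps : p * s = 1 := by rw [hpdef]; field_simp
  have hpm : p * m = s := by
    rw [hpdef, ← hs2]; field_simp
  have hp2m : p^2 = 1/(m:ℝ) := by
    rw [hpdef, ← hs2]; field_simp
  -- group counting
  set d : ℕ := (Finset.univ.filter fun g : G => g • x₀ = x₀).card with hddef
  have hnmd : n = m * d := card_group_eq htrans x₀
  have hd1 : 1 ≤ d := by
    rw [hddef]
    apply Finset.card_pos.2
    exact ⟨1, Finset.mem_filter.2 ⟨Finset.mem_univ _, one_smul G x₀⟩⟩
  have hn1 : 1 ≤ n := Fintype.card_pos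
  have hnR : (n:ℝ) = (m:ℝ) * d := by exact_mod_cast hnmd
  -- the random-set machinery
  set fixC : G → ℕ := fun a => (Finset.univ.filter fun x : X => a • x = x).card with hfixdef
  have hsumfix : ∑ a ∈ (Finset.univ : Finset G), fixC a = n := sum_fix_eq htrans x₀
  set good : Finset G := Finset.univ.filter (fun a : G => (fixC a : ℝ) ≤ t * s) with hgood
  have hbadcard : ((n:ℝ) - good.card) * (t*s) ≤ n := by
    have h1 : (Finset.univ \ good).card = n - good.card := by
      rw [Finset.card_sdiff_of_subset (Finset.subset_univ _), Finset.card_univ]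
    have h2 : ∀ a ∈ Finset.univ \ good, (t*s) ≤ (fixC a : ℝ) := by
      intro a ha
      rw [Finset.mem_sdiff, hgood, Finset.mem_filter] at ha
      have h3 := ha.2
      push_neg at h3
      exact le_of_lt (h3 (Finset.mem_univ a))
    have h4 : ((Finset.univ \ good).card : ℝ) * (t*s)
        ≤ ∑ a ∈ Finset.univ \ good, (fixC a : ℝ) := by
      calc ((Finset.univ \ good).card : ℝ) * (t*s)
          = ∑ _a ∈ Finset.univ \ good, (t*s) := by
            rw [Finset.sum_const, nsmul_eq_mul]
        _ ≤ ∑ a ∈ Finset.univ \ good, (fixC a : ℝ) := Finset.sum_le_sum h2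
    have h5 : ∑ a ∈ Finset.univ \ good, (fixC a : ℝ)
        ≤ ∑ a ∈ (Finset.univ : Finset G), (fixC a : ℝ) :=
      Finset.sum_le_sum_of_subset_of_nonneg (Finset.sdiff_subset)
        (fun a _ _ => by positivity)
    have h6 : ∑ a ∈ (Finset.univ : Finset G), (fixC a : ℝ) = n := by
      rw [← Nat.cast_sum]
      exact_mod_cast congrArg (Nat.cast : ℕ → ℝ) hsumfix
    have h7 : ((Finset.univ \ good).card : ℝ) = (n:ℝ) - good.card := by
      rw [h1]
      have hgn : good.card ≤ n := by
        rw [hndef, ← Finset.card_univ]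
        exact Finset.card_le_card (Finset.subset_univ _)
      push_cast [Nat.cast_sub hgn]
      ring
    rw [← h7]
    linarith
  have hgoodcard : (n:ℝ) * (1 - t) ≤ good.card := by
    have hts : 1 ≤ t^2 * s := by
      have : t⁻¹ ≤ t^2 * s := by
        calc t⁻¹ = t^2 * t⁻¹^3 := by field_simp
          _ ≤ t^2 * s := by nlinarith [hsge, sq_nonneg t]
      linarith [htinv1]
    have hts0 : 0 < t * s := by positivity
    -- (n - good.card) ≤ n/(t*s) ≤ n*t
    have h8 : (n:ℝ) - good.card ≤ (n:ℝ) / (t*s) := by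
      rw [le_div_iff₀ hts0]
      exact hbadcard
    have h9 : (n:ℝ) / (t*s) ≤ (n:ℝ) * t := by
      rw [div_le_iff₀ hts0]
      have hn0 : (0:ℝ) ≤ n := by positivity
      calc (n:ℝ) = n * 1 := by ring
        _ ≤ (n:ℝ) * (t^2 * s) := mul_le_mul_of_nonneg_left hts hn0
        _ = (n:ℝ) * t * (t * s) := by ring
    nlinarith
  -- the random sets
  set AS : Finset X → Finset G :=
    fun S => Finset.univ.filter (fun a : G => ∀ x : X, ¬(x ∈ S ∧ a • x ∈ S)) with hASdef
  have hAcard : ∀ S : Finset X, ((AS S).card : ℝ)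
      = ∑ a ∈ (Finset.univ : Finset G),
        (if ∀ x : X, ¬(x ∈ S ∧ a • x ∈ S) then (1:ℝ) else 0) := by
    intro S
    rw [hASdef, Finset.card_filter]
    push_cast
    rfl
  have hEA : Ew p (Finset.univ : Finset X) (fun S => ((AS S).card : ℝ))
      = ∑ a ∈ (Finset.univ : Finset G), Ew p (Finset.univ : Finset X)
        (fun S => if ∀ x : X, ¬(x ∈ S ∧ a • x ∈ S) then (1:ℝ) else 0) := by
    rw [Ew_congr (fun S _ => hAcard S), Ew_sum]
  have hmu1 : 1/(m:ℝ) ≤ 1 := by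
    rw [div_le_one hmpos]; exact_mod_cast (by omega : 1 ≤ m)
  have hexpnn : (0:ℝ) ≤ Real.exp (-1) * (1 - 1/(m:ℝ)) :=
    mul_nonneg (Real.exp_nonneg _) (by linarith)
  have ht1' : t ≤ 1 := by linarith
  have hgoodbound : ∀ a ∈ good, (1-t) * (Real.exp (-1) * (1 - 1/(m:ℝ)))
      ≤ Ew p (Finset.univ : Finset X)
        (fun S => if ∀ x : X, ¬(x ∈ S ∧ a • x ∈ S) then (1:ℝ) else 0) := by
    intro a ha
    have havoid := Ew_avoid (p := p) (le_of_lt hp0) (le_of_lt hp1) (fun x : X => a • x)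
    refine le_trans ?_ havoid
    have hfix : (fixC a : ℝ) ≤ t * s := (Finset.mem_filter.1 ha).2
    have h1 : 1 - t ≤ (1-p)^(fixC a) := by
      have hb := one_add_mul_le_pow (a := -p) (by linarith) (fixC a)
      have h2 : (fixC a : ℝ) * p ≤ t := by
        calc (fixC a : ℝ) * p ≤ (t*s) * p := mul_le_mul_of_nonneg_right hfix (le_of_lt hp0)
          _ = t * (p*s) := by ring
          _ = t := by rw [hps]; ring
      calc 1 - t ≤ 1 + (fixC a : ℝ) * (-p) := by push_cast; linarith
        _ ≤ (1 + -p)^(fixC a) := hb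
        _ = (1-p)^(fixC a) := by rw [show (1:ℝ) + -p = 1 - p from by ring]
    have h2 : Real.exp (-1) * (1 - 1/(m:ℝ)) ≤ (1 - p^2)^m := by
      rw [hp2m]; exact exp_neg_one_le_pow hm2
    have hnn2 : (0:ℝ) ≤ 1 - p := by linarith
    calc (1-t) * (Real.exp (-1) * (1 - 1/(m:ℝ)))
        ≤ (1-p)^(fixC a) * ((1 - p^2)^m) :=
          mul_le_mul h1 h2 hexpnn (pow_nonneg hnn2 _)
      _ = (1-p)^((Finset.univ.filter fun x : X => a • x = x).card) * (1 - p^2)^m := by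
          rw [hfixdef]
  have hEAlarge : (n:ℝ)*(1-t) * ((1-t) * (Real.exp (-1) * (1 - 1/(m:ℝ))))
      ≤ Ew p (Finset.univ : Finset X) (fun S => ((AS S).card : ℝ)) := by
    rw [hEA]
    have hstep1 : ∑ a ∈ good, Ew p (Finset.univ : Finset X)
          (fun S => if ∀ x : X, ¬(x ∈ S ∧ a • x ∈ S) then (1:ℝ) else 0)
        ≤ ∑ a ∈ (Finset.univ : Finset G), Ew p (Finset.univ : Finset X)
          (fun S => if ∀ x : X, ¬(x ∈ S ∧ a • x ∈ S) then (1:ℝ) else 0) := by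
      refine Finset.sum_le_sum_of_subset_of_nonneg (Finset.subset_univ _) ?_
      intro a _ _
      refine Ew_nonneg (le_of_lt hp0) (le_of_lt hp1) (fun S _ => ?_)
      split <;> norm_num
    have hstep2 : (good.card : ℝ) * ((1-t) * (Real.exp (-1) * (1 - 1/(m:ℝ))))
        ≤ ∑ a ∈ good, Ew p (Finset.univ : Finset X)
          (fun S => if ∀ x : X, ¬(x ∈ S ∧ a • x ∈ S) then (1:ℝ) else 0) := by
      calc (good.card : ℝ) * ((1-t) * (Real.exp (-1) * (1 - 1/(m:ℝ))))
          = ∑ _a ∈ good, (1-t) * (Real.exp (-1) * (1 - 1/(m:ℝ))) := by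
            rw [Finset.sum_const, nsmul_eq_mul]
        _ ≤ _ := Finset.sum_le_sum hgoodbound
    have hgb : (n:ℝ)*(1-t) * ((1-t) * (Real.exp (-1) * (1 - 1/(m:ℝ))))
        ≤ (good.card : ℝ) * ((1-t) * (Real.exp (-1) * (1 - 1/(m:ℝ)))) := by
      have hb0 : (0:ℝ) ≤ (1-t) * (Real.exp (-1) * (1 - 1/(m:ℝ))) :=
        mul_nonneg (by linarith) hexpnn
      exact mul_le_mul_of_nonneg_right hgoodcard hb0
    linarith
  -- Chebyshev for the size
  set badind : Finset X → ℝ := fun S => if (S.card:ℝ) < (1-t)*s then 1 else 0 with hbaddef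
  have hEbad : Ew p (Finset.univ : Finset X) badind ≤ t := by
    set c : ℝ := ((t*s)^2)⁻¹ with hcdef
    have hc0 : 0 < c := by positivity
    have hpt : ∀ S ⊆ (Finset.univ : Finset X),
        badind S ≤ c * (((S.card:ℝ) - p*(m:ℝ))^2) := by
      intro S _
      simp only [hbaddef]
      by_cases h : (S.card:ℝ) < (1-t)*s
      · rw [if_pos h]
        have hts0 : (0:ℝ) < t * s := by positivity
        have h1 : t*s ≤ s - S.card := by nlinarith
        have h2 : (t*s)^2 ≤ ((S.card:ℝ) - s)^2 := by nlinarith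
        have h3 : (t*s)^2 ≤ ((S.card:ℝ) - p*(m:ℝ))^2 := by rwa [hpm]
        have h4 : (1:ℝ) ≤ ((S.card:ℝ) - p*(m:ℝ))^2 / (t*s)^2 :=
          (one_le_div (by positivity)).2 h3
        calc (1:ℝ) ≤ ((S.card:ℝ) - p*(m:ℝ))^2 / (t*s)^2 := h4
          _ = c * (((S.card:ℝ) - p*(m:ℝ))^2) := by
              rw [hcdef, div_eq_mul_inv]; ring
      · rw [if_neg h]
        positivity
    calc Ew p (Finset.univ : Finset X) badind
        ≤ Ew p (Finset.univ : Finset X)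
          (fun S => c * (((S.card:ℝ) - p*(m:ℝ))^2)) :=
          Ew_mono (le_of_lt hp0) (le_of_lt hp1) hpt
      _ = c * Ew p (Finset.univ : Finset X)
          (fun S => ((S.card:ℝ) - p*(m:ℝ))^2) := Ew_const_mul _ _
      _ ≤ c * (p * m) :=
          mul_le_mul_of_nonneg_left (Ew_card_var (le_of_lt hp0) (le_of_lt hp1)) (le_of_lt hc0)
      _ = 1/(t^2*s) := by
          rw [hcdef, hpm]; field_simp
      _ ≤ t := by
          rw [div_le_iff₀ (by positivity)]
          have : t⁻¹^3 ≤ s := hsge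
          have h9 : 1 ≤ t^3 * s := by
            have := mul_le_mul_of_nonneg_left hsge (le_of_lt (pow_pos htpos 3))
            calc (1:ℝ) = t^3 * t⁻¹^3 := by field_simp
              _ ≤ t^3 * s := this
          nlinarith
  -- combine: expected value of the truncated count
  set E1 : ℝ := Real.exp (-1) * (1 - 1/(m:ℝ)) with hE1def
  set D : ℝ := (1-t)^2 * E1 - t with hDdef
  set hfun : Finset X → ℝ :=
    fun S => if (1-t)*s ≤ (S.card:ℝ) then ((AS S).card : ℝ) else 0 with hfundef
  have hASn : ∀ S : Finset X, ((AS S).card : ℝ) ≤ n := by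
    intro S
    have : (AS S).card ≤ n := by
      rw [hndef, ← Finset.card_univ]
      exact Finset.card_le_card (Finset.subset_univ _)
    exact_mod_cast this
  have hpoint : ∀ S ⊆ (Finset.univ : Finset X),
      ((AS S).card : ℝ) - (n:ℝ) * badind S ≤ hfun S := by
    intro S _
    simp only [hfundef, hbaddef]
    by_cases h : (1-t)*s ≤ (S.card:ℝ)
    · rw [if_pos h, if_neg (by linarith)]
      simp
    · rw [if_neg h, if_pos (by linarith [lt_of_not_ge h])]
      have := hASn S
      linarith
  have hEh : (n:ℝ) * D ≤ Ew p (Finset.univ : Finset X) hfun := by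
    have hsplit : Ew p (Finset.univ : Finset X)
        (fun S => ((AS S).card : ℝ) - (n:ℝ) * badind S)
        = Ew p (Finset.univ : Finset X) (fun S => ((AS S).card : ℝ))
          - (n:ℝ) * Ew p (Finset.univ : Finset X) badind := by
      rw [Ew_sub, Ew_const_mul]
    have hmono := Ew_mono (le_of_lt hp0) (le_of_lt hp1) hpoint
    rw [hsplit] at hmono
    have hnt : (n:ℝ) * Ew p (Finset.univ : Finset X) badind ≤ (n:ℝ) * t :=
      mul_le_mul_of_nonneg_left hEbad (by positivity)
    have hDexp : (n:ℝ) * D = (n:ℝ)*(1-t) * ((1-t) * E1) - (n:ℝ)*t := by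
      rw [hDdef]; ring
    rw [hDexp]
    linarith [hEAlarge, hmono, hnt]
  -- numeric inequality
  have hexple : Real.exp (-1) ≤ 1 := by
    have h := Real.exp_le_exp.2 (show (-1:ℝ) ≤ 0 by norm_num)
    rwa [Real.exp_zero] at h
  have hexp0 : (0:ℝ) < Real.exp (-1) := Real.exp_pos _
  have hmu : 1/(m:ℝ) ≤ t := by
    rw [div_le_iff₀ hmpos]
    have h1 : t⁻¹ ≤ t⁻¹^6 := le_self_pow₀ htinv1 (by norm_num)
    have h2 : t⁻¹ ≤ (m:ℝ) := le_trans h1 hmR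
    calc (1:ℝ) = t * t⁻¹ := by field_simp
      _ ≤ t * m := mul_le_mul_of_nonneg_left h2 (le_of_lt htpos)
  have hmu0 : (0:ℝ) < 1/(m:ℝ) := by positivity
  have hnum : Real.exp (-1) - ε ≤ D * (1-t)^2 := by
    rw [hDdef, hE1def]
    exact numeric_key hexp0 hexple htpos ht8 htε hmu0 hmu
  have hD0 : 0 < D := by
    rcases le_or_gt D 0 with h | h
    · exfalso
      have : D*(1-t)^2 ≤ 0 := mul_nonpos_of_nonpos_of_nonneg h (sq_nonneg _)
      linarith
    · exact h
  -- extract a good set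
  obtain ⟨S₀, hS₀V, hS₀⟩ := Ew_exists_ge hp0 hp1 (Finset.univ : Finset X) hfun
  have hnD : (n:ℝ) * D ≤ hfun S₀ := le_trans hEh hS₀
  have hnD0 : (0:ℝ) < (n:ℝ) * D := by
    have : (0:ℝ) < (n:ℝ) := by exact_mod_cast hn1
    positivity
  have hcond : (1-t)*s ≤ (S₀.card:ℝ) := by
    by_contra h
    rw [hfundef] at hnD
    simp only [if_neg h] at hnD
    linarith
  have hA0 : (n:ℝ) * D ≤ ((AS S₀).card : ℝ) := by
    rw [hfundef] at hnD
    simpa only [if_pos hcond] using hnD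
  -- the sets
  set B : Finset G := Finset.univ.filter (fun g : G => g • x₀ ∈ S₀) with hBdef
  refine ⟨AS S₀, B, B, rfl, ?_, ?_⟩
  · -- no equation a * b = c
    intro a ha b hb c hc habc
    rw [hASdef, Finset.mem_filter] at ha
    rw [hBdef, Finset.mem_filter] at hb hc
    refine ha.2 (b • x₀) ⟨hb.2, ?_⟩
    rw [← mul_smul, habc]
    exact hc.2
  · -- the cardinality bound
    have hBfib : B.card = ∑ x ∈ S₀, (B.filter (fun g => g • x₀ = x)).card :=
      Finset.card_eq_sum_card_fiberwise (fun g hg => (Finset.mem_filter.1 hg).2)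
    have hBx : ∀ x ∈ S₀, (B.filter (fun g => g • x₀ = x)).card = d := by
      intro x hx
      have heq : B.filter (fun g => g • x₀ = x)
          = Finset.univ.filter (fun g : G => g • x₀ = x) := by
        ext g
        simp only [hBdef, Finset.mem_filter, Finset.filter_filter, Finset.mem_univ, true_and]
        constructor
        · exact fun h => h.2
        · exact fun h => ⟨h ▸ hx, h⟩
      rw [heq, hddef, fiber_card_eq htrans x₀ x]
    have hBcard : B.card = S₀.card * d := by
      rw [hBfib, Finset.sum_congr rfl hBx, Finset.sum_const, smul_eq_mul]
    have hBR : (B.card : ℝ) = (S₀.card : ℝ) * d := by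
      rw [hBcard]; push_cast; ring
    have hd0 : (0:ℝ) ≤ (d:ℝ) := by positivity
    have hBge : (1-t)*s*(d:ℝ) ≤ (B.card : ℝ) := by
      rw [hBR]
      exact mul_le_mul_of_nonneg_right hcond hd0
    have hBnn : (0:ℝ) ≤ (1-t)*s*(d:ℝ) := by
      have : (0:ℝ) ≤ 1 - t := by linarith
      positivity
    have hfinal : ((n:ℝ)*D) * ((1-t)*s*(d:ℝ)) * ((1-t)*s*(d:ℝ))
        ≤ ((AS S₀).card : ℝ) * B.card * B.card := by
      have hinner : ((n:ℝ)*D) * ((1-t)*s*(d:ℝ)) ≤ ((AS S₀).card : ℝ) * B.card :=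
        mul_le_mul hA0 hBge hBnn (Nat.cast_nonneg _)
      exact mul_le_mul hinner hBge hBnn
        (mul_nonneg (Nat.cast_nonneg _) (Nat.cast_nonneg _))
    have hLHS : (Real.exp (-1) - ε) * (n:ℝ)^3 / (m:ℝ)
        ≤ ((n:ℝ)*D) * ((1-t)*s*(d:ℝ)) * ((1-t)*s*(d:ℝ)) := by
      have hids : ((n:ℝ)*D) * ((1-t)*s*(d:ℝ)) * ((1-t)*s*(d:ℝ))
          = (D*(1-t)^2) * ((m:ℝ)^2*(d:ℝ)^3) := by
        rw [hnR, ← hs2]; ring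
      have hids2 : (Real.exp (-1) - ε) * (n:ℝ)^3 / (m:ℝ)
          = (Real.exp (-1) - ε) * ((m:ℝ)^2*(d:ℝ)^3) := by
        rw [hnR]
        field_simp
      rw [hids, hids2]
      exact mul_le_mul_of_nonneg_right hnum
        (mul_nonneg (pow_nonneg (Nat.cast_nonneg _) _) (pow_nonneg (Nat.cast_nonneg _) _))
    exact le_trans hLHS hfinal
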